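/- Let I, J ⊆ V be disjoint of sizes i and j. The paired function p_{I,J} is identically zero if and only if (min(i,j) > min(k, n−k)) or (max(i,j) > max(k, n−k)). -/
import Mathlib


open Finset

lemma exists_mid {α : Type*} [Fintype α] [DecidableEq α] {k : ℕ}
    (I J : Finset α) (hd : Disjoint I J) (h1 : I.card ≤ k)
    (h2 : k ≤ Fintype.card α - J.card) :
    ∃ K : Finset α, I ⊆ K ∧ K ⊆ Finset.univ \ J ∧ K.card = k := by
  have hsub : I ⊆ Finset.univ \ J := by
    intro x hx
    simp only [mem_sdiff, mem_univ, true_and]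
    exact fun hxJ => (Finset.disjoint_left.mp hd hx) hxJ
  have hcard : (Finset.univ \ J).card = Fintype.card α - J.card := by
    rw [Finset.card_sdiff_of_subset (Finset.subset_univ _), Finset.card_univ]
  obtain ⟨K, hIK, hKt, hKc⟩ := Finset.exists_subsuperset_card_eq hsub h1 (by omega)
  exact ⟨K, hIK, hKt, hKc⟩

/-- `p_{I,J}` is identically zero iff `min(i,j) > min(k,n-k)` or `max(i,j) > max(k,n-k)`. -/
theorem paired_eq_zero_iff {α : Type*} [Fintype α] [DecidableEq α] (n k i j : ℕ)
    (hn : Fintype.card α = n) (hk : k ≤ n)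
    (I J : Finset α) (hd : Disjoint I J) (hi : I.card = i) (hj : J.card = j) :
    (∀ K ∈ Finset.powersetCard k (Finset.univ : Finset α),
      ((if I ⊆ K ∧ K ⊆ Finset.univ \ J then (1 : ℝ) else 0) +
        (if J ⊆ K ∧ K ⊆ Finset.univ \ I then (1 : ℝ) else 0)) = 0) ↔
      (min k (n - k) < min i j ∨ max k (n - k) < max i j) := by
  have hIJ : i + j ≤ n := by
    rw [← hi, ← hj, ← Finset.card_union_of_disjoint hd, ← hn]
    exact Finset.card_le_univ _
  have hcompJ : (Finset.univ \ J : Finset α).card = n - j := by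
    rw [Finset.card_sdiff_of_subset (Finset.subset_univ _), Finset.card_univ, hn, hj]
  have hcompI : (Finset.univ \ I : Finset α).card = n - i := by
    rw [Finset.card_sdiff_of_subset (Finset.subset_univ _), Finset.card_univ, hn, hi]
  constructor
  · intro h
    by_contra hc
    push_neg at hc
    have hcase : (i ≤ k ∧ k ≤ n - j) ∨ (j ≤ k ∧ k ≤ n - i) := by omega
    rcases hcase with ⟨ha, hb⟩ | ⟨ha, hb⟩
    · obtain ⟨K, hIK, hKt, hKc⟩ := exists_mid (k := k) I J hd (by omega) (by rw [hn, hj]; omega)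
      have := h K (by simp [Finset.mem_powersetCard, hKc])
      rw [if_pos ⟨hIK, hKt⟩] at this
      split_ifs at this <;> norm_num at this
    · obtain ⟨K, hJK, hKt, hKc⟩ := exists_mid (k := k) J I hd.symm (by omega) (by rw [hn, hi]; omega)
      have := h K (by simp [Finset.mem_powersetCard, hKc])
      rw [if_pos (show J ⊆ K ∧ K ⊆ Finset.univ \ I from ⟨hJK, hKt⟩)] at this
      split_ifs at this <;> norm_num at this
  · intro h K hK
    rw [Finset.mem_powersetCard] at hK
    have hKc := hK.2
    rw [if_neg, if_neg, add_zero]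
    · rintro ⟨hJK, hKI⟩
      have h1 : j ≤ k := by rw [← hj, ← hKc]; exact Finset.card_le_card hJK
      have h2 : k ≤ n - i := by rw [← hKc, ← hcompI]; exact Finset.card_le_card hKI
      omega
    · rintro ⟨hIK, hKJ⟩
      have h1 : i ≤ k := by rw [← hi, ← hKc]; exact Finset.card_le_card hIK
      have h2 : k ≤ n - j := by rw [← hKc, ← hcompJ]; exact Finset.card_le_card hKJ
      omega
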